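/- Let G be a finite connected graph. The operator Ψ(w) = Φ(QFZ(G,w)) on edge weight maps w : E → {0,…,|E|−1} is idempotent: Ψ(Ψ(w)) = Ψ(w). -/

import Mathlib

open SimpleGraph

variable {V : Type*}

/-- `P'` refines `P`: every region of `P'` is contained in a region of `P`. -/
def Refines (P' P : Set (Set V)) : Prop := ∀ R ∈ P', ∃ S ∈ P, R ⊆ S

/-- `x` and `y` lie in the same region of `P`. -/
def SameRegion (P : Set (Set V)) (x y : V) : Prop := ∃ R ∈ P, x ∈ R ∧ y ∈ R

/-- The cut of a partition `P` for the graph `G`. -/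
def cutOf (G : SimpleGraph V) (P : Set (Set V)) : Set (Sym2 V) :=
  {e | e ∈ G.edgeSet ∧ ∀ x y : V, e = s(x, y) → ¬ SameRegion P x y}

/-- The `lam`-level partition of a subgraph `X`: connected components of the
`lam`-level graph `(V(X), {u ∈ E(X) : w u < lam})`, as a set of regions. -/
def levelPartition {G : SimpleGraph V} (X : G.Subgraph) {α : Type*} [LT α]
    (w : Sym2 V → α) (lam : α) : Set (Set V) :=
  {S | ∃ x ∈ X.verts,
    S = {y | Relation.ReflTransGen (fun a b => X.Adj a b ∧ w s(a, b) < lam) x y}}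

/-- The `lam`-level partition of the graph `G` itself (quasi-flat zones at level `lam`). -/
def qfz (G : SimpleGraph V) (w : Sym2 V → ℕ) (lam : ℕ) : Set (Set V) :=
  {S | ∃ x : V,
    S = {y | Relation.ReflTransGen (fun a b => G.Adj a b ∧ w s(a, b) < lam) x y}}

/-- `(P₀, …, P_l)` is a complete hierarchy on `V`. -/
def IsCompleteHierarchy (P : ℕ → Set (Set V)) (l : ℕ) : Prop :=
  (∀ i ≤ l, Setoid.IsPartition (P i)) ∧
  (∀ i, 1 ≤ i → i ≤ l → Refines (P (i - 1)) (P i)) ∧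
  (P 0 = {S | ∃ x : V, S = {x}}) ∧
  (P l = {Set.univ})

/-- A complete hierarchy all of whose regions induce connected subgraphs of `G`. -/
def IsConnectedHierarchy (G : SimpleGraph V) (P : ℕ → Set (Set V)) (l : ℕ) : Prop :=
  IsCompleteHierarchy P l ∧ ∀ i ≤ l, ∀ S ∈ P i, (G.induce S).Connected

/-- The saliency map of the hierarchy `(P₀, …, P_l)`:
`Φ(H)(u) = max {lam ≤ l : u ∈ φ(P lam)}`. -/
noncomputable def saliency (G : SimpleGraph V) (P : ℕ → Set (Set V)) (l : ℕ)
    (e : Sym2 V) : ℕ :=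
  sSup {lam | lam ≤ l ∧ e ∈ cutOf G (P lam)}

/-- `w` is a saliency map on `G`: the saliency map of some connected complete
hierarchy of depth `|E|`. -/
def IsSaliencyMap (G : SimpleGraph V) [Fintype G.edgeSet] (w : Sym2 V → ℕ) : Prop :=
  ∃ P : ℕ → Set (Set V), IsConnectedHierarchy G P G.edgeFinset.card ∧
    ∀ e ∈ G.edgeSet, w e = saliency G P G.edgeFinset.card e

/-- Total weight of a subgraph. -/
noncomputable def sgWeight [Fintype V] {G : SimpleGraph V} {α : Type*}
    [AddCommMonoid α] (X : G.Subgraph) (w : Sym2 V → α) : α :=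
  ∑ e ∈ (Set.toFinite X.edgeSet).toFinset, w e

/-- `X` is a minimum spanning tree of `(G, w)`. -/
def IsMST [Fintype V] {G : SimpleGraph V} {α : Type*} [AddCommMonoid α] [Preorder α]
    (X : G.Subgraph) (w : Sym2 V → α) : Prop :=
  X.verts = Set.univ ∧ X.Connected ∧
  ∀ Y : G.Subgraph, Y.verts = Set.univ → Y.Connected → sgWeight X w ≤ sgWeight Y w


section AuxIdem

variable {G : SimpleGraph V}

/-- The level-`lam` adjacency relation. -/
private def rel' (G : SimpleGraph V) (w : Sym2 V → ℕ) (lam : ℕ) (a b : V) : Prop :=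
  G.Adj a b ∧ w s(a, b) < lam

private lemma rel'_symm (w : Sym2 V → ℕ) (lam : ℕ) : Symmetric (rel' G w lam) := by
  rintro a b ⟨h1, h2⟩
  exact ⟨h1.symm, by rwa [Sym2.eq_swap]⟩

private lemma sameRegion_qfz (w : Sym2 V → ℕ) (lam : ℕ) (x y : V) :
    SameRegion (qfz G w lam) x y ↔ Relation.ReflTransGen (rel' G w lam) x y := by
  constructor
  · rintro ⟨R, ⟨z, rfl⟩, hx, hy⟩
    exact ((@Relation.ReflTransGen.symmetric _ _ ⟨rel'_symm w lam⟩).symm _ _ hx).trans hy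
  · intro h
    exact ⟨_, ⟨x, rfl⟩, Relation.ReflTransGen.refl, h⟩

private lemma mem_cut_qfz (w : Sym2 V → ℕ) (lam : ℕ) {x y : V} (hxy : G.Adj x y) :
    s(x, y) ∈ cutOf G (qfz G w lam) ↔
      ¬ Relation.ReflTransGen (rel' G w lam) x y := by
  constructor
  · intro h hR
    exact h.2 x y rfl ((sameRegion_qfz w lam x y).2 hR)
  · intro h
    refine ⟨hxy, ?_⟩
    rintro a b hab hs
    rcases Sym2.eq_iff.1 hab with ⟨h1, h2⟩ | ⟨h1, h2⟩ <;> subst h1 <;> subst h2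
    · exact h ((sameRegion_qfz w lam x y).1 hs)
    · exact h ((@Relation.ReflTransGen.symmetric _ _ ⟨rel'_symm w lam⟩).symm _ _
        ((sameRegion_qfz w lam y x).1 hs))

private lemma saliency_qfz_eq (w : Sym2 V → ℕ) (l : ℕ) {x y : V} (hxy : G.Adj x y) :
    saliency G (qfz G w) l s(x, y) =
      sSup {lam | lam ≤ l ∧ ¬ Relation.ReflTransGen (rel' G w lam) x y} := by
  unfold saliency
  congr 1
  ext lam
  simp only [Set.mem_setOf_eq]
  exact and_congr_right fun _ => mem_cut_qfz w lam hxy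

private lemma zero_mem_S (w : Sym2 V → ℕ) (l : ℕ) {x y : V} (hxy : G.Adj x y) :
    0 ∈ {lam | lam ≤ l ∧ ¬ Relation.ReflTransGen (rel' G w lam) x y} := by
  refine ⟨Nat.zero_le _, fun h => ?_⟩
  rcases h.cases_head with rfl | ⟨c, hc, _⟩
  · exact hxy.ne rfl
  · exact Nat.not_lt_zero _ hc.2

private lemma bdd_S (w : Sym2 V → ℕ) (l : ℕ) (x y : V) :
    BddAbove {lam | lam ≤ l ∧ ¬ Relation.ReflTransGen (rel' G w lam) x y} :=
  ⟨l, fun _ h => h.1⟩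

private lemma rtg_mono (w : Sym2 V → ℕ) {lam mu : ℕ} (h : lam ≤ mu) {x y : V}
    (hr : Relation.ReflTransGen (rel' G w lam) x y) :
    Relation.ReflTransGen (rel' G w mu) x y :=
  Relation.ReflTransGen.mono (fun _ _ hab => ⟨hab.1, hab.2.trans_le h⟩) _ _ hr

private lemma mem_S_iff_le (w : Sym2 V → ℕ) (l : ℕ) {x y : V} (hxy : G.Adj x y)
    (lam : ℕ) (hlam : lam ≤ l) :
    (¬ Relation.ReflTransGen (rel' G w lam) x y) ↔
      lam ≤ sSup {mu | mu ≤ l ∧ ¬ Relation.ReflTransGen (rel' G w mu) x y} := by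
  have hmem := Nat.sSup_mem ⟨0, zero_mem_S w l hxy⟩ (bdd_S w l x y)
  constructor
  · intro h
    exact le_csSup (bdd_S w l x y) ⟨hlam, h⟩
  · intro h hr
    exact hmem.2 (rtg_mono w h hr)

private lemma sSup_S_le (w : Sym2 V → ℕ) (l : ℕ) {x y : V} (hxy : G.Adj x y) :
    sSup {mu | mu ≤ l ∧ ¬ Relation.ReflTransGen (rel' G w mu) x y} ≤ w s(x, y) := by
  have hmem := Nat.sSup_mem ⟨0, zero_mem_S w l hxy⟩ (bdd_S w l x y)
  by_contra h
  push_neg at h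
  exact hmem.2 (Relation.ReflTransGen.single ⟨hxy, h⟩)

/-- Key lemma: at every level `lam ≤ l`, the components w.r.t. `Ψ(w)` and `w` agree. -/
private lemma rtg_eq (w : Sym2 V → ℕ) (l : ℕ) (lam : ℕ) (hlam : lam ≤ l) (x y : V) :
    Relation.ReflTransGen (rel' G (saliency G (qfz G w) l) lam) x y ↔
      Relation.ReflTransGen (rel' G w lam) x y := by
  constructor
  · intro h
    induction h with
    | refl => exact Relation.ReflTransGen.refl
    | tail _ hstep ih =>
      obtain ⟨hadj, hlt⟩ := hstep
      refine ih.trans ?_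
      rw [saliency_qfz_eq w l hadj] at hlt
      by_contra hcon
      exact absurd ((mem_S_iff_le w l hadj lam hlam).1 hcon) (not_le.2 hlt)
  · intro h
    refine Relation.ReflTransGen.mono (fun a b hab => ⟨hab.1, lt_of_le_of_lt ?_ hab.2⟩) _ _ h
    rw [saliency_qfz_eq w l hab.1]
    exact sSup_S_le w l hab.1

end AuxIdem

/-- the operator `Ψ = Φ ∘ QFZ(G, ·)` is idempotent. -/
theorem saliency_operator_idempotent [Fintype V] (G : SimpleGraph V)
    [Fintype G.edgeSet] (hG : G.Connected) (w : Sym2 V → ℕ)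
    (hw : ∀ e ∈ G.edgeSet, w e < G.edgeFinset.card) :
    ∀ e ∈ G.edgeSet,
      saliency G (qfz G (saliency G (qfz G w) G.edgeFinset.card)) G.edgeFinset.card e =
        saliency G (qfz G w) G.edgeFinset.card e := by
  intro e he
  induction e using Sym2.ind with
  | _ x y =>
    have hxy : G.Adj x y := he
    rw [saliency_qfz_eq (saliency G (qfz G w) G.edgeFinset.card) G.edgeFinset.card hxy,
      saliency_qfz_eq w G.edgeFinset.card hxy]
    congr 1
    ext lam
    simp only [Set.mem_setOf_eq]
    constructor
    · rintro ⟨h1, h2⟩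
      exact ⟨h1, fun hr => h2 ((rtg_eq w G.edgeFinset.card lam h1 x y).2 hr)⟩
    · rintro ⟨h1, h2⟩
      exact ⟨h1, fun hr => h2 ((rtg_eq w G.edgeFinset.card lam h1 x y).1 hr)⟩
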